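/- Let n ≥ 3 and let N, N' be unrooted binary proper phylogenetic networks on n leaves, N having reticulation number r, such that a single PR^- move removing an edge e of N yields N'. Then there exists an NNI^0-sequence followed by one NNI^- that transforms N into N' by only moving and removing e, whose total length is O(n + r); moreover if neither N nor N' contains parallel edges, then neither do the intermediate networks. -/

import Mathlib

/-!
Formalization framework: unrooted binary proper phylogenetic networks as
multigraphs on vertex set ⊆ ℕ, with leaves labelled 1,…,n, together with
the rearrangement operations NNI, PR, TBR and the induced distances.
-/

/-- An undirected multigraph with natural-number vertices: a finite vertex set
and a multiset of edges (unordered pairs); parallel edges are allowed. -/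
structure MGraph where
  V : Finset ℕ
  E : Multiset (Sym2 ℕ)

namespace MGraph

/-- Degree of a vertex: number of edges containing it (graphs are loopless). -/
def deg (G : MGraph) (v : ℕ) : ℕ :=
  Multiset.card (G.E.filter (fun e => v ∈ e))

/-- Adjacency. -/
def Adj (G : MGraph) (u v : ℕ) : Prop := s(u, v) ∈ G.E

/-- Reachability. -/
def Reach (G : MGraph) : ℕ → ℕ → Prop := Relation.ReflTransGen G.Adj

/-- Connectivity. -/
def Conn (G : MGraph) : Prop := ∀ u ∈ G.V, ∀ v ∈ G.V, G.Reach u v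

/-- Delete one copy of an edge. -/
def deleteEdge (G : MGraph) (e : Sym2 ℕ) : MGraph := ⟨G.V, G.E.erase e⟩

/-- A cut-edge: its removal disconnects the graph. -/
def IsCutEdge (G : MGraph) (e : Sym2 ℕ) : Prop :=
  e ∈ G.E ∧ ¬ (G.deleteEdge e).Conn

/-- A leaf: a vertex of degree one. -/
def IsLeaf (G : MGraph) (v : ℕ) : Prop := v ∈ G.V ∧ G.deg v = 1

/-- Proper: every cut-edge separates two (labelled) leaves, i.e. both
components after its removal contain a leaf. -/
def Proper (G : MGraph) : Prop :=
  ∀ u v : ℕ, G.IsCutEdge s(u, v) →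
    (∃ x, G.IsLeaf x ∧ (G.deleteEdge s(u, v)).Reach u x) ∧
    (∃ y, G.IsLeaf y ∧ (G.deleteEdge s(u, v)).Reach v y)

/-- No loops. -/
def Loopless (G : MGraph) : Prop := ∀ e ∈ G.E, ¬ e.IsDiag

/-- All edge endpoints are vertices. -/
def EdgesIn (G : MGraph) : Prop := ∀ e ∈ G.E, ∀ x ∈ e, x ∈ G.V

/-- An unrooted binary phylogenetic network on leaves {1,…,n}
(possibly improper): connected loopless multigraph, every vertex has degree
1 or 3, and the degree-one vertices (leaves) are exactly the labels 1,…,n. -/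
def IsPreNetwork (n : ℕ) (G : MGraph) : Prop :=
  G.EdgesIn ∧ G.Loopless ∧ G.Conn ∧ G.V.Nonempty ∧
  (∀ v ∈ G.V, G.deg v = 1 ∨ G.deg v = 3) ∧
  G.V.filter (fun v => G.deg v = 1) = Finset.Icc 1 n

/-- An unrooted binary proper phylogenetic network on leaves {1,…,n}. -/
def IsNetwork (n : ℕ) (G : MGraph) : Prop := IsPreNetwork n G ∧ G.Proper

/-- Reticulation number: |E| - (|V| - 1). -/
def retic (G : MGraph) : ℕ := Multiset.card G.E + 1 - G.V.card

/-- A network in tier r: reticulation number exactly r. -/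
def IsNetworkR (n r : ℕ) (G : MGraph) : Prop :=
  IsNetwork n G ∧ Multiset.card G.E + 1 = G.V.card + r

/-- An unrooted binary phylogenetic tree on leaves {1,…,n}. -/
def IsTree (n : ℕ) (G : MGraph) : Prop := IsNetworkR n 0 G

/-- G has a pair of parallel edges. -/
def HasParallel (G : MGraph) : Prop := ∃ e : Sym2 ℕ, 1 < G.E.count e

/-- Subdivide the edge {x,y} with the new vertex u. -/
def SubdivEdge (G : MGraph) (x y u : ℕ) (G' : MGraph) : Prop :=
  s(x, y) ∈ G.E ∧ u ∉ G.V ∧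
  G'.V = insert u G.V ∧ G'.E = s(x, u) ::ₘ s(u, y) ::ₘ G.E.erase s(x, y)

/-- Subdivide some edge. -/
def Subdiv (G G' : MGraph) : Prop := ∃ x y u, SubdivEdge G x y u G'

/-- Suppress a degree-two vertex v with incident edges {v,a},{v,b}. -/
def Suppress (G : MGraph) (v : ℕ) (G' : MGraph) : Prop :=
  ∃ a b : ℕ, G.E.filter (fun e => v ∈ e) = (s(v, a) ::ₘ {s(v, b)}) ∧
    G'.V = G.V.erase v ∧
    G'.E = s(a, b) ::ₘ ((G.E.erase s(v, a)).erase s(v, b))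

/-- Remove the edge {x,y}: delete it and suppress the two resulting
degree-two endpoints. -/
def RemoveEdge (G : MGraph) (x y : ℕ) (G' : MGraph) : Prop :=
  s(x, y) ∈ G.E ∧
  ∃ G₁ : MGraph, Suppress (G.deleteEdge s(x, y)) x G₁ ∧ Suppress G₁ y G'

/-- TBR⁺: subdivide two edges with new vertices u, v and add the edge {u,v}. -/
def TBRplus (G G' : MGraph) : Prop :=
  ∃ (x y u x' y' v : ℕ) (G₁ G₂ : MGraph),
    SubdivEdge G x y u G₁ ∧ SubdivEdge G₁ x' y' v G₂ ∧
    G'.V = G₂.V ∧ G'.E = s(u, v) ::ₘ G₂.E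

/-- TBR⁻: remove an edge. -/
def TBRminus (G G' : MGraph) : Prop := ∃ x y, RemoveEdge G x y G'

/-- TBR⁰: either remove an internal edge and reconnect via a new edge between
two subdivision points, or prune an external edge at its internal endpoint and
regraft it. -/
def TBRzero (G G' : MGraph) : Prop :=
  (∃ x y : ℕ, ¬ G.IsLeaf x ∧ ¬ G.IsLeaf y ∧
    ∃ G₁ : MGraph, RemoveEdge G x y G₁ ∧
    ∃ (a b u c d v : ℕ) (G₂ G₃ : MGraph),
      SubdivEdge G₁ a b u G₂ ∧ SubdivEdge G₂ c d v G₃ ∧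
      G'.V = G₃.V ∧ G'.E = s(u, v) ::ₘ G₃.E) ∨
  (∃ u v : ℕ, G.IsLeaf v ∧ s(u, v) ∈ G.E ∧
    ∃ G₁ : MGraph, Suppress (G.deleteEdge s(u, v)) u G₁ ∧
    ∃ (a b w : ℕ) (G₂ : MGraph), SubdivEdge G₁ a b w G₂ ∧
      G'.V = G₂.V ∧ G'.E = s(w, v) ::ₘ G₂.E)

/-- PR⁰ pruning the edge {u,v} at u and regrafting that end. -/
def PRzeroAt (G : MGraph) (u v : ℕ) (G' : MGraph) : Prop :=
  s(u, v) ∈ G.E ∧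
  ∃ G₁ : MGraph, Suppress (G.deleteEdge s(u, v)) u G₁ ∧
  ∃ (a b w : ℕ) (G₂ : MGraph), SubdivEdge G₁ a b w G₂ ∧
    G'.V = G₂.V ∧ G'.E = s(w, v) ::ₘ G₂.E

/-- PR⁰: prune an edge at one endpoint and regraft it. -/
def PRzero (G G' : MGraph) : Prop := ∃ u v, PRzeroAt G u v G'

/-- NNI⁰ along an internal axis edge {u,v}: prune the edge f = {u,a} (f ≠ axis)
at u and regraft it to an edge {v,b} (≠ axis) incident to v; f' = {w,a} is the
resulting moved edge. -/
def NNIzeroAt (G : MGraph) (f : Sym2 ℕ) (G' : MGraph) (f' : Sym2 ℕ) : Prop :=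
  ∃ (u v a b w : ℕ) (G₁ G₂ : MGraph),
    f = s(u, a) ∧ f' = s(w, a) ∧
    s(u, a) ∈ G.E ∧ s(u, v) ∈ G.E.erase s(u, a) ∧
    ¬ G.IsLeaf u ∧ ¬ G.IsLeaf v ∧ a ≠ v ∧ b ≠ u ∧
    Suppress (G.deleteEdge s(u, a)) u G₁ ∧
    SubdivEdge G₁ v b w G₂ ∧
    G'.V = G₂.V ∧ G'.E = s(w, a) ::ₘ G₂.E

/-- NNI⁰. -/
def NNIzero (G G' : MGraph) : Prop := ∃ f f', NNIzeroAt G f G' f'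

/-- NNI⁺: subdivide two adjacent edges and join the subdivision points. -/
def NNIplus (G G' : MGraph) : Prop :=
  ∃ (x y z u v : ℕ) (G₁ G₂ : MGraph),
    s(x, y) ∈ G.E ∧ s(x, z) ∈ G.E.erase s(x, y) ∧
    SubdivEdge G x y u G₁ ∧ SubdivEdge G₁ x z v G₂ ∧
    G'.V = G₂.V ∧ G'.E = s(u, v) ::ₘ G₂.E

/-- NNI⁻ removing the triangle edge f. -/
def NNIminusAt (G : MGraph) (f : Sym2 ℕ) (G' : MGraph) : Prop :=
  ∃ x y z : ℕ, f = s(x, y) ∧ s(x, z) ∈ G.E ∧ s(y, z) ∈ G.E ∧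
    RemoveEdge G x y G'

/-- NNI⁻: remove an edge of a triangle. -/
def NNIminus (G G' : MGraph) : Prop := ∃ f, NNIminusAt G f G'

/-- An NNI operation. -/
def NNI (G G' : MGraph) : Prop := NNIzero G G' ∨ NNIplus G G' ∨ NNIminus G G'

/-- A PR operation. -/
def PR (G G' : MGraph) : Prop := PRzero G G' ∨ TBRplus G G' ∨ TBRminus G G'

/-- A TBR operation. -/
def TBR (G G' : MGraph) : Prop := TBRzero G G' ∨ TBRplus G G' ∨ TBRminus G G'

/-- A length-k sequence of R-steps, all intermediate (and final) objects
satisfying the class predicate C. -/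
def SeqOn {α : Type} (R : α → α → Prop) (C : α → Prop) : ℕ → α → α → Prop
  | 0, a, b => a = b
  | k + 1, a, b => ∃ x, R a x ∧ C x ∧ SeqOn R C k x b

/-- The induced distance: length of a shortest R-sequence within the class C. -/
noncomputable def rdist (R : MGraph → MGraph → Prop) (C : MGraph → Prop)
    (G G' : MGraph) : ℕ :=
  sInf {k : ℕ | SeqOn R C k G G'}

/-- Subgraph (respecting vertex names, hence leaf labels). -/
def Subgraph (H G : MGraph) : Prop := H.V ⊆ G.V ∧ H.E ≤ G.E

/-- N displays M: some subdivision of M is a subgraph of N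
(labelled leaves are fixed natural numbers, so labels are respected). -/
def Displays (N M : MGraph) : Prop :=
  ∃ M', Relation.ReflTransGen Subdiv M M' ∧ Subgraph M' N

end MGraph

open MGraph


section Helpers
open Multiset

namespace MGraph

lemma sym2_mem {x a b : ℕ} : x ∈ s(a,b) ↔ x = a ∨ x = b := Sym2.mem_iff

lemma sym2_eq {a b c d : ℕ} : s(a,b) = s(c,d) ↔ (a = c ∧ b = d) ∨ (a = d ∧ b = c) :=
  Sym2.eq_iff

lemma sym2_swap {a b : ℕ} : s(a,b) = s(b,a) := Sym2.eq_swap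

/-- degree of an edge multiset at a vertex -/
def degE (E : Multiset (Sym2 ℕ)) (v : ℕ) : ℕ :=
  Multiset.card (E.filter (fun e => v ∈ e))

lemma deg_eq_degE (G : MGraph) (v : ℕ) : G.deg v = degE G.E v := rfl

lemma degE_cons (e : Sym2 ℕ) (E : Multiset (Sym2 ℕ)) (v : ℕ) :
    degE (e ::ₘ E) v = (if v ∈ e then 1 else 0) + degE E v := by
  by_cases h : v ∈ e <;> simp [degE, Multiset.filter_cons, h] <;> omega

lemma degE_eq_zero {E : Multiset (Sym2 ℕ)} {v : ℕ} (h : ∀ e ∈ E, v ∉ e) :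
    degE E v = 0 := by
  simp only [degE, Multiset.card_eq_zero, Multiset.filter_eq_nil]
  exact h

lemma degE_erase {E : Multiset (Sym2 ℕ)} {e : Sym2 ℕ} (he : e ∈ E) (v : ℕ) :
    degE (E.erase e) v = degE E v - (if v ∈ e then 1 else 0) := by
  conv_rhs => rw [← Multiset.cons_erase he]
  rw [degE_cons]; omega

lemma degE_pos_of_mem {E : Multiset (Sym2 ℕ)} {e : Sym2 ℕ} {v : ℕ}
    (he : e ∈ E) (hv : v ∈ e) : 0 < degE E v := by
  have : e ∈ E.filter (fun e => v ∈ e) := Multiset.mem_filter.2 ⟨he, hv⟩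
  have := Multiset.card_pos_iff_exists_mem.2 ⟨e, this⟩
  exact this

lemma degE_two_le {E : Multiset (Sym2 ℕ)} {e₁ e₂ : Sym2 ℕ} {v : ℕ}
    (h1 : e₁ ∈ E) (h2 : e₂ ∈ E) (hne : e₁ ≠ e₂) (hv1 : v ∈ e₁) (hv2 : v ∈ e₂) :
    2 ≤ degE E v := by
  have m1 : e₁ ∈ E.filter (fun e => v ∈ e) := Multiset.mem_filter.2 ⟨h1, hv1⟩
  have m2 : e₂ ∈ E.filter (fun e => v ∈ e) := Multiset.mem_filter.2 ⟨h2, hv2⟩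
  have m2' : e₂ ∈ (E.filter (fun e => v ∈ e)).erase e₁ :=
    Multiset.mem_erase_of_ne (Ne.symm hne) |>.2 m2
  have h1' : 1 ≤ Multiset.card ((E.filter (fun e => v ∈ e)).erase e₁) :=
    Multiset.card_pos_iff_exists_mem.2 ⟨e₂, m2'⟩
  have h2' := Multiset.card_erase_of_mem m1
  rw [Nat.pred_eq_sub_one] at h2'
  unfold degE
  omega

lemma mem_of_mem_erase {E : Multiset (Sym2 ℕ)} {e f : Sym2 ℕ}
    (h : e ∈ E.erase f) : e ∈ E := Multiset.mem_of_le (Multiset.erase_le f E) h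

/-- if `e ∈ E.erase f` and `f ∈ E` then `f ∈ E.erase e`. -/
lemma erase_mem_swap {E : Multiset (Sym2 ℕ)} {e f : Sym2 ℕ}
    (hf : f ∈ E) (h : e ∈ E.erase f) : f ∈ E.erase e := by
  by_cases hef : e = f
  · subst hef
    exact h
  · rw [Multiset.mem_erase_of_ne (Ne.symm hef)]
    exact hf

lemma reach_mono {G G' : MGraph} (hE : ∀ e ∈ G.E, e ∈ G'.E) {u v : ℕ}
    (h : G.Reach u v) : G'.Reach u v :=
  Relation.ReflTransGen.mono (fun a b hab => hE _ hab) u v h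

lemma adj_symm {G : MGraph} {u v : ℕ} (h : G.Adj u v) : G.Adj v u := by
  unfold Adj at *; rwa [sym2_swap]

lemma reach_symm {G : MGraph} {u v : ℕ} (h : G.Reach u v) : G.Reach v u := by
  induction h with
  | refl => exact Relation.ReflTransGen.refl
  | tail _ hab ih => exact Relation.ReflTransGen.head (adj_symm hab) ih

end MGraph

end Helpers


section SubdivLemmas
namespace MGraph

variable {G G' : MGraph} {a b u : ℕ}

lemma SubdivEdge.mem_ab (h : SubdivEdge G a b u G') : s(a,b) ∈ G.E := h.1
lemma SubdivEdge.nu (h : SubdivEdge G a b u G') : u ∉ G.V := h.2.1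
lemma SubdivEdge.V' (h : SubdivEdge G a b u G') : G'.V = insert u G.V := h.2.2.1
lemma SubdivEdge.E' (h : SubdivEdge G a b u G') :
    G'.E = s(a,u) ::ₘ s(u,b) ::ₘ G.E.erase s(a,b) := h.2.2.2

lemma SubdivEdge.ha (hE : G.EdgesIn) (h : SubdivEdge G a b u G') : a ∈ G.V :=
  hE _ h.mem_ab a (sym2_mem.2 (Or.inl rfl))

lemma SubdivEdge.hb (hE : G.EdgesIn) (h : SubdivEdge G a b u G') : b ∈ G.V :=
  hE _ h.mem_ab b (sym2_mem.2 (Or.inr rfl))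

lemma SubdivEdge.au (hE : G.EdgesIn) (h : SubdivEdge G a b u G') : a ≠ u :=
  fun hh => h.nu (hh ▸ h.ha hE)

lemma SubdivEdge.bu (hE : G.EdgesIn) (h : SubdivEdge G a b u G') : b ≠ u :=
  fun hh => h.nu (hh ▸ h.hb hE)

lemma SubdivEdge.ab (hL : G.Loopless) (h : SubdivEdge G a b u G') : a ≠ b := by
  intro hh
  exact hL _ h.mem_ab (by rw [Sym2.mk_isDiag_iff]; exact hh)

lemma SubdivEdge.u_not_mem (hE : G.EdgesIn) (h : SubdivEdge G a b u G') :
    ∀ e ∈ G.E, u ∉ e := fun e he hm => h.nu (hE e he u hm)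

lemma SubdivEdge.symm (h : SubdivEdge G a b u G') : SubdivEdge G b a u G' := by
  refine ⟨by rw [sym2_swap]; exact h.mem_ab, h.nu, h.V', ?_⟩
  rw [h.E']
  rw [show s(b,a) = s(a,b) from sym2_swap, show s(b,u) = s(u,b) from sym2_swap,
    show s(a,u) = s(u,a) by rw [sym2_swap]]
  exact (Multiset.cons_swap _ _ _)

lemma SubdivEdge.edgesIn (hE : G.EdgesIn) (h : SubdivEdge G a b u G') : G'.EdgesIn := by
  intro e he x hx
  rw [h.E'] at he
  rw [h.V']
  rcases Multiset.mem_cons.1 he with rfl | he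
  · rcases sym2_mem.1 hx with rfl | rfl
    · exact Finset.mem_insert_of_mem (h.ha hE)
    · exact Finset.mem_insert_self _ _
  rcases Multiset.mem_cons.1 he with rfl | he
  · rcases sym2_mem.1 hx with rfl | rfl
    · exact Finset.mem_insert_self _ _
    · exact Finset.mem_insert_of_mem (h.hb hE)
  · exact Finset.mem_insert_of_mem (hE e (mem_of_mem_erase he) x hx)

lemma SubdivEdge.loopless (hE : G.EdgesIn) (hL : G.Loopless)
    (h : SubdivEdge G a b u G') : G'.Loopless := by
  intro e he
  rw [h.E'] at he
  rcases Multiset.mem_cons.1 he with rfl | he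
  · rw [Sym2.mk_isDiag_iff]; exact h.au hE
  rcases Multiset.mem_cons.1 he with rfl | he
  · rw [Sym2.mk_isDiag_iff]; exact fun hh => h.bu hE hh.symm
  · exact hL e (mem_of_mem_erase he)

lemma SubdivEdge.deg_other (hE : G.EdgesIn) (hL : G.Loopless)
    (h : SubdivEdge G a b u G') {v : ℕ} (hv : v ≠ u) : G'.deg v = G.deg v := by
  have hab := h.ab hL
  have hpos : v ∈ s(a,b) → 0 < degE G.E v := degE_pos_of_mem h.mem_ab
  rw [deg_eq_degE, deg_eq_degE, h.E', degE_cons, degE_cons, degE_erase h.mem_ab]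
  have hau := h.au hE
  have hbu := h.bu hE
  by_cases hva : v = a <;> by_cases hvb : v = b <;>
    simp [sym2_mem, hva, hvb, hv, hab, hau, hbu, Ne.symm hab, Ne.symm hau,
      Ne.symm hbu] at hpos ⊢ <;> omega

lemma SubdivEdge.deg_u (hE : G.EdgesIn) (h : SubdivEdge G a b u G') :
    G'.deg u = 2 := by
  have h0 : degE (G.E.erase s(a,b)) u = 0 :=
    degE_eq_zero (fun e he => h.u_not_mem hE e (mem_of_mem_erase he))
  rw [deg_eq_degE, h.E', degE_cons, degE_cons, h0]
  simp [sym2_mem]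

lemma SubdivEdge.reach (h : SubdivEdge G a b u G') {z t : ℕ}
    (hr : G.Reach z t) : G'.Reach z t := by
  induction hr with
  | refl => exact Relation.ReflTransGen.refl
  | tail _ hcd ih =>
    rename_i c d _
    refine Relation.ReflTransGen.trans ih ?_
    by_cases hcd' : s(c,d) = s(a,b)
    · have hau : G'.Adj a u := by
        unfold Adj; rw [h.E']; exact Multiset.mem_cons_self _ _
      have hub : G'.Adj u b := by
        unfold Adj; rw [h.E']
        exact Multiset.mem_cons.2 (Or.inr (Multiset.mem_cons_self _ _))
      rcases sym2_eq.1 hcd' with ⟨rfl, rfl⟩ | ⟨rfl, rfl⟩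
      · exact Relation.ReflTransGen.head hau (Relation.ReflTransGen.single hub)
      · exact Relation.ReflTransGen.head (adj_symm hub)
          (Relation.ReflTransGen.single (adj_symm hau))
    · refine Relation.ReflTransGen.single ?_
      unfold Adj at hcd ⊢
      rw [h.E']
      exact Multiset.mem_cons.2 (Or.inr (Multiset.mem_cons.2 (Or.inr
        ((Multiset.mem_erase_of_ne hcd').2 hcd))))

lemma SubdivEdge.adj_au (h : SubdivEdge G a b u G') : G'.Adj a u := by
  unfold Adj; rw [h.E']; exact Multiset.mem_cons_self _ _

lemma SubdivEdge.adj_ub (h : SubdivEdge G a b u G') : G'.Adj u b := by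
  unfold Adj; rw [h.E']
  exact Multiset.mem_cons.2 (Or.inr (Multiset.mem_cons_self _ _))

lemma SubdivEdge.conn (hE : G.EdgesIn) (h : SubdivEdge G a b u G')
    (hc : G.Conn) : G'.Conn := by
  have hreachu : ∀ t ∈ G.V, G'.Reach u t := fun t ht =>
    Relation.ReflTransGen.head h.adj_ub (h.reach (hc b (h.hb hE) t ht))
  intro z hz t ht
  rw [h.V'] at hz ht
  rcases Finset.mem_insert.1 hz with hzu | hz2
  · subst hzu
    rcases Finset.mem_insert.1 ht with htu | ht2
    · subst htu; exact Relation.ReflTransGen.refl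
    · exact hreachu t ht2
  · rcases Finset.mem_insert.1 ht with htu | ht2
    · subst htu; exact reach_symm (hreachu z hz2)
    · exact h.reach (hc z hz2 t ht2)

end MGraph
end SubdivLemmas


section ProperLemmas
namespace MGraph

variable {G G' : MGraph} {a b u : ℕ}

lemma edgesIn_delete (hE : G.EdgesIn) (e : Sym2 ℕ) : (G.deleteEdge e).EdgesIn :=
  fun f hf x hx => hE f (mem_of_mem_erase hf) x hx

lemma leaf_subdiv (hE : G.EdgesIn) (hL : G.Loopless) (h : SubdivEdge G a b u G')
    {z : ℕ} (hz : G.IsLeaf z) : G'.IsLeaf z := by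
  have hzu : z ≠ u := fun hh => h.nu (hh ▸ hz.1)
  exact ⟨h.V' ▸ Finset.mem_insert_of_mem hz.1, (h.deg_other hE hL hzu).trans hz.2⟩

lemma delete_subdiv (hE : G.EdgesIn) (h : SubdivEdge G a b u G') {e₁ : Sym2 ℕ}
    (he₁ : e₁ ∈ G.E.erase s(a,b)) :
    SubdivEdge (G.deleteEdge e₁) a b u (G'.deleteEdge e₁) := by
  have hu1 : u ∉ e₁ := h.u_not_mem hE e₁ (mem_of_mem_erase he₁)
  have hne1 : s(a,u) ≠ e₁ := fun hh => hu1 (hh ▸ sym2_mem.2 (Or.inr rfl))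
  have hne2 : s(u,b) ≠ e₁ := fun hh => hu1 (hh ▸ sym2_mem.2 (Or.inl rfl))
  refine ⟨erase_mem_swap h.mem_ab he₁, h.nu, h.V', ?_⟩
  show G'.E.erase e₁ = _
  rw [h.E', Multiset.erase_cons_tail _ hne1, Multiset.erase_cons_tail _ hne2,
    Multiset.erase_comm]
  rfl

lemma pendant_aux (hE : G.EdgesIn) (hL : G.Loopless) (hP : G.Proper)
    (h : SubdivEdge G a b u G') (hcut : ¬ (G'.deleteEdge s(a,u)).Conn) :
    (∃ x, G'.IsLeaf x ∧ (G'.deleteEdge s(a,u)).Reach a x) ∧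
    (∃ y, G'.IsLeaf y ∧ (G'.deleteEdge s(a,u)).Reach u y) := by
  have hDE : (G'.deleteEdge s(a,u)).E = s(u,b) ::ₘ G.E.erase s(a,b) := by
    show G'.E.erase s(a,u) = _
    rw [h.E', Multiset.erase_cons_head]
  have hmono : ∀ e ∈ (G.deleteEdge s(a,b)).E, e ∈ (G'.deleteEdge s(a,u)).E := by
    intro e he
    rw [hDE]
    exact Multiset.mem_cons.2 (Or.inr he)
  have hadj_ub : (G'.deleteEdge s(a,u)).Adj u b := by
    unfold Adj
    rw [hDE]
    exact Multiset.mem_cons_self _ _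
  have cutG : G.IsCutEdge s(a,b) := by
    refine ⟨h.mem_ab, fun hconn => hcut ?_⟩
    intro z hz t ht
    have hVd : (G'.deleteEdge s(a,u)).V = insert u G.V := h.V'
    rw [hVd] at hz ht
    have hreachu : ∀ t ∈ G.V, (G'.deleteEdge s(a,u)).Reach u t := fun t ht =>
      Relation.ReflTransGen.head hadj_ub (reach_mono hmono
        (hconn b (show b ∈ (G.deleteEdge s(a,b)).V from (h.hb hE : b ∈ G.V)) t ht))
    rcases Finset.mem_insert.1 hz with hzu | hz2
    · subst hzu
      rcases Finset.mem_insert.1 ht with htu | ht2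
      · subst htu; exact Relation.ReflTransGen.refl
      · exact hreachu t ht2
    · rcases Finset.mem_insert.1 ht with htu | ht2
      · subst htu; exact reach_symm (hreachu z hz2)
      · exact reach_mono hmono (hconn z hz2 t ht2)
  obtain ⟨⟨x1, l1, r1⟩, ⟨x2, l2, r2⟩⟩ := hP a b cutG
  exact ⟨⟨x1, leaf_subdiv hE hL h l1, reach_mono hmono r1⟩,
    ⟨x2, leaf_subdiv hE hL h l2,
      Relation.ReflTransGen.head hadj_ub (reach_mono hmono r2)⟩⟩

lemma SubdivEdge.proper (hE : G.EdgesIn) (hL : G.Loopless) (hP : G.Proper)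
    (h : SubdivEdge G a b u G') : G'.Proper := by
  intro u₁ v₁ hcut
  obtain ⟨hmem, hdisc⟩ := hcut
  rw [h.E'] at hmem
  rcases Multiset.mem_cons.1 hmem with heq | hmem
  · rw [heq] at hdisc
    obtain ⟨⟨x1, l1, r1⟩, ⟨x2, l2, r2⟩⟩ := pendant_aux hE hL hP h hdisc
    rcases sym2_eq.1 heq with ⟨h1, h2⟩ | ⟨h1, h2⟩ <;> subst h1 <;> subst h2 <;>
      first
      | exact ⟨⟨x1, l1, r1⟩, ⟨x2, l2, r2⟩⟩
      | exact ⟨⟨x2, l2, r2⟩, ⟨x1, l1, r1⟩⟩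
      | (rw [show s(u₁,v₁) = s(v₁,u₁) from sym2_swap]
         first
         | exact ⟨⟨x1, l1, r1⟩, ⟨x2, l2, r2⟩⟩
         | exact ⟨⟨x2, l2, r2⟩, ⟨x1, l1, r1⟩⟩)
  rcases Multiset.mem_cons.1 hmem with heq | hmem
  · have heq' : s(u₁,v₁) = s(b,u) := heq.trans sym2_swap
    rw [heq'] at hdisc
    obtain ⟨⟨x1, l1, r1⟩, ⟨x2, l2, r2⟩⟩ := pendant_aux hE hL hP h.symm hdisc
    rcases sym2_eq.1 heq' with ⟨h1, h2⟩ | ⟨h1, h2⟩ <;> subst h1 <;> subst h2 <;>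
      first
      | exact ⟨⟨x1, l1, r1⟩, ⟨x2, l2, r2⟩⟩
      | exact ⟨⟨x2, l2, r2⟩, ⟨x1, l1, r1⟩⟩
      | (rw [show s(u₁,v₁) = s(v₁,u₁) from sym2_swap]
         first
         | exact ⟨⟨x1, l1, r1⟩, ⟨x2, l2, r2⟩⟩
         | exact ⟨⟨x2, l2, r2⟩, ⟨x1, l1, r1⟩⟩)
  · have hsd := delete_subdiv hE h hmem
    have cutG : G.IsCutEdge s(u₁,v₁) := by
      refine ⟨mem_of_mem_erase hmem, fun hconn => hdisc ?_⟩
      exact hsd.conn (edgesIn_delete hE _) hconn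
    obtain ⟨⟨x1, l1, r1⟩, ⟨x2, l2, r2⟩⟩ := hP u₁ v₁ cutG
    exact ⟨⟨x1, leaf_subdiv hE hL h l1, hsd.reach r1⟩,
      ⟨x2, leaf_subdiv hE hL h l2, hsd.reach r2⟩⟩

lemma addEdge_proper {w y : ℕ} (hV : G'.V = G.V) (hEE : G'.E = s(w,y) ::ₘ G.E)
    (hconn : G.Conn) (hP : G.Proper) (hdw : G.deg w ≠ 1) (hdy : G.deg y ≠ 1) :
    G'.Proper := by
  have hleaf : ∀ z, G.IsLeaf z → G'.IsLeaf z := by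
    intro z hz
    have hzw : z ≠ w := fun hh => hdw (hh ▸ hz.2)
    have hzy : z ≠ y := fun hh => hdy (hh ▸ hz.2)
    refine ⟨hV ▸ hz.1, ?_⟩
    rw [deg_eq_degE, hEE, degE_cons, if_neg (by simp [sym2_mem, hzw, hzy]),
      ← deg_eq_degE, Nat.zero_add]
    exact hz.2
  intro u₁ v₁ hcut
  obtain ⟨hmem, hdisc⟩ := hcut
  by_cases heq : s(u₁,v₁) = s(w,y)
  · exfalso
    apply hdisc
    have hED : (G'.deleteEdge s(u₁,v₁)).E = G.E := by
      show G'.E.erase _ = _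
      rw [hEE, heq, Multiset.erase_cons_head]
    intro z hz t ht
    have hz' : z ∈ G.V := by rwa [show (G'.deleteEdge s(u₁,v₁)).V = G.V from hV] at hz
    have ht' : t ∈ G.V := by rwa [show (G'.deleteEdge s(u₁,v₁)).V = G.V from hV] at ht
    exact reach_mono (fun e he => by rwa [hED]) (hconn z hz' t ht')
  · have hmem' : s(u₁,v₁) ∈ G.E := by
      rw [hEE] at hmem
      exact (Multiset.mem_cons.1 hmem).resolve_left heq
    have hED : (G'.deleteEdge s(u₁,v₁)).E = s(w,y) ::ₘ G.E.erase s(u₁,v₁) := by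
      show G'.E.erase _ = _
      rw [hEE, Multiset.erase_cons_tail _ (Ne.symm heq)]
    have hmono : ∀ e ∈ (G.deleteEdge s(u₁,v₁)).E, e ∈ (G'.deleteEdge s(u₁,v₁)).E := by
      intro e he
      rw [hED]
      exact Multiset.mem_cons.2 (Or.inr he)
    have cutG : G.IsCutEdge s(u₁,v₁) := by
      refine ⟨hmem', fun hconn2 => hdisc ?_⟩
      intro z hz t ht
      have hz' : z ∈ G.V := by rwa [show (G'.deleteEdge s(u₁,v₁)).V = G.V from hV] at hz
      have ht' : t ∈ G.V := by rwa [show (G'.deleteEdge s(u₁,v₁)).V = G.V from hV] at ht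
      exact reach_mono hmono (hconn2 z hz' t ht')
    obtain ⟨⟨x1, l1, r1⟩, ⟨x2, l2, r2⟩⟩ := hP u₁ v₁ cutG
    exact ⟨⟨x1, hleaf _ l1, reach_mono hmono r1⟩,
      ⟨x2, hleaf _ l2, reach_mono hmono r2⟩⟩

end MGraph
end ProperLemmas


section CfgLemmas
namespace MGraph

/-- Configuration: `M` is `Q` with the edge `{p,q}` subdivided by the fresh
vertex `w`, together with the moving edge `{w,y}`. -/
def Cfg (Q : MGraph) (y p q w : ℕ) (M : MGraph) : Prop :=
  s(p,q) ∈ Q.E ∧ w ∉ Q.V ∧ M.V = insert w Q.V ∧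
  M.E = s(w,y) ::ₘ s(p,w) ::ₘ s(w,q) ::ₘ Q.E.erase s(p,q)

variable {Q M N' : MGraph} {y p q w c₁ c₂ : ℕ} {n r : ℕ}

lemma Cfg.symm (h : Cfg Q y p q w M) : Cfg Q y q p w M := by
  obtain ⟨h1, h2, h3, h4⟩ := h
  refine ⟨by rwa [sym2_swap], h2, h3, ?_⟩
  rw [h4, show s(q,w) = s(w,q) from sym2_swap, show s(w,p) = s(p,w) from sym2_swap,
    show s(q,p) = s(p,q) from sym2_swap]
  exact congrArg (Multiset.cons _) (Multiset.cons_swap _ _ _)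

/-- The double-subdivision graph underlying a configuration. -/
lemma Cfg.subdiv3 (h : Cfg Q y p q w M) :
    SubdivEdge Q p q w ⟨insert w Q.V, s(p,w) ::ₘ s(w,q) ::ₘ Q.E.erase s(p,q)⟩ :=
  ⟨h.1, h.2.1, rfl, rfl⟩

lemma Cfg.deg_w (hE : Q.EdgesIn) (h : Cfg Q y p q w M) (hwy : w ≠ y) :
    M.deg w = 3 := by
  have h0 : degE (Q.E.erase s(p,q)) w = 0 :=
    degE_eq_zero (fun e he hm => h.2.1 (hE e (mem_of_mem_erase he) w hm))
  rw [deg_eq_degE, h.2.2.2, degE_cons, degE_cons, degE_cons, h0]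
  simp [sym2_mem]

lemma Cfg.deg_other (hE : Q.EdgesIn) (hL : Q.Loopless) (h : Cfg Q y p q w M)
    {v : ℕ} (hv : v ≠ w) : M.deg v = (if v = y then 1 else 0) + Q.deg v := by
  have hQ3 := h.subdiv3
  have hd : degE (s(p,w) ::ₘ s(w,q) ::ₘ Q.E.erase s(p,q)) v = Q.deg v := by
    have := hQ3.deg_other hE hL hv
    rw [deg_eq_degE] at this
    exact this
  rw [deg_eq_degE, h.2.2.2, degE_cons, hd]
  congr 1
  by_cases hvy : v = y <;> simp [sym2_mem, hv, hvy]

/-- A configuration over a (proper phylogenetic) base is a network of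
the same tier. -/
lemma cfg_network (hn : 3 ≤ n) (hN' : IsNetwork n N')
    (hsub : SubdivEdge N' c₁ c₂ y Q) (hcfg : Cfg Q y p q w M)
    (hpy : p ≠ y) (hqy : q ≠ y) :
    IsNetwork n M ∧ Multiset.card M.E = Multiset.card Q.E + 2 ∧
      M.V.card = Q.V.card + 1 := by
  obtain ⟨⟨hE', hL', hC', hne', hdeg', hleaf'⟩, hP'⟩ := hN'
  have hEQ : Q.EdgesIn := hsub.edgesIn hE'
  have hLQ : Q.Loopless := hsub.loopless hE' hL'
  have hCQ : Q.Conn := hsub.conn hE' hC'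
  have hyQ : y ∈ Q.V := hsub.V' ▸ Finset.mem_insert_self _ _
  have hdegQy : Q.deg y = 2 := hsub.deg_u hE'
  have hwy : w ≠ y := fun hh => hcfg.2.1 (hh ▸ hyQ)
  have hQ3 := hcfg.subdiv3
  set Q₃ : MGraph := ⟨insert w Q.V, s(p,w) ::ₘ s(w,q) ::ₘ Q.E.erase s(p,q)⟩ with hQ3def
  have hEQ3 : Q₃.EdgesIn := hQ3.edgesIn hEQ
  have hLQ3 : Q₃.Loopless := hQ3.loopless hEQ hLQ
  have hCQ3 : Q₃.Conn := hQ3.conn hEQ hCQ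
  have hMV : M.V = Q₃.V := hcfg.2.2.1
  have hME : M.E = s(w,y) ::ₘ Q₃.E := hcfg.2.2.2
  have hdegy3 : Q₃.deg y = 2 := by
    rw [hQ3.deg_other hEQ hLQ (Ne.symm hwy)]
    exact hdegQy
  have hdegw3 : Q₃.deg w = 2 := hQ3.deg_u hEQ
  -- degrees of M
  have hdegMw : M.deg w = 3 := hcfg.deg_w hEQ hwy
  have hdegMy : M.deg y = 3 := by
    rw [hcfg.deg_other hEQ hLQ (Ne.symm hwy), if_pos rfl, hdegQy]
  have hdegQ_of : ∀ v, v ≠ y → Q.deg v = N'.deg v := by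
    intro v hv
    by_cases hvV : v = y
    · exact absurd hvV hv
    · exact hsub.deg_other hE' hL' hv
  have hdegM_old : ∀ v, v ≠ w → v ≠ y → M.deg v = N'.deg v := by
    intro v hvw hvy
    rw [hcfg.deg_other hEQ hLQ hvw, if_neg hvy, Nat.zero_add]
    exact hdegQ_of v hvy
  have hVM : M.V = insert w (insert y N'.V) := by
    rw [hcfg.2.2.1, hsub.V']
  have hwy' : w ∉ N'.V := fun hh => hcfg.2.1 (hsub.V' ▸ Finset.mem_insert_of_mem hh)
  have hyN' : y ∉ N'.V := hsub.nu
  refine ⟨⟨⟨?_, ?_, ?_, ?_, ?_, ?_⟩, ?_⟩, ?_, ?_⟩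
  · -- EdgesIn
    intro e he x hx
    rw [hME] at he
    rw [hMV]
    rcases Multiset.mem_cons.1 he with rfl | he
    · rcases sym2_mem.1 hx with rfl | rfl
      · exact Finset.mem_insert_self _ _
      · exact Finset.mem_insert_of_mem hyQ
    · exact hEQ3 e he x hx
  · -- Loopless
    intro e he
    rw [hME] at he
    rcases Multiset.mem_cons.1 he with rfl | he
    · rw [Sym2.mk_isDiag_iff]; exact hwy
    · exact hLQ3 e he
  · -- Conn
    intro z hz t ht
    rw [hMV] at hz ht
    exact reach_mono (fun e he => by rw [hME]; exact Multiset.mem_cons_of_mem he)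
      (hCQ3 z hz t ht)
  · -- Nonempty
    rw [hVM]; exact Finset.insert_nonempty _ _
  · -- degrees
    intro v hv
    rw [hVM] at hv
    rcases Finset.mem_insert.1 hv with rfl | hv
    · right; exact hdegMw
    rcases Finset.mem_insert.1 hv with rfl | hv
    · right; exact hdegMy
    · have hvw : v ≠ w := fun hh => hwy' (hh ▸ hv)
      have hvy : v ≠ y := fun hh => hyN' (hh ▸ hv)
      rw [hdegM_old v hvw hvy]
      exact hdeg' v hv
  · -- leaves
    ext v
    simp only [Finset.mem_filter, hVM, Finset.mem_insert]
    constructor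
    · rintro ⟨hv, hd⟩
      rcases hv with rfl | rfl | hv
      · rw [hdegMw] at hd; omega
      · rw [hdegMy] at hd; omega
      · have hvw : v ≠ w := fun hh => hwy' (hh ▸ hv)
        have hvy : v ≠ y := fun hh => hyN' (hh ▸ hv)
        rw [hdegM_old v hvw hvy] at hd
        rw [← hleaf']
        exact Finset.mem_filter.2 ⟨hv, hd⟩
    · intro hv
      rw [← hleaf'] at hv
      obtain ⟨hv, hd⟩ := Finset.mem_filter.1 hv
      have hvw : v ≠ w := fun hh => hwy' (hh ▸ hv)
      have hvy : v ≠ y := fun hh => hyN' (hh ▸ hv)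
      exact ⟨Or.inr (Or.inr hv), by rw [hdegM_old v hvw hvy]; exact hd⟩
  · -- Proper
    have hPQ : Q.Proper := hsub.proper hE' hL' hP'
    have hPQ3 : Q₃.Proper := hQ3.proper hEQ hLQ hPQ
    exact addEdge_proper hMV hME hCQ3 hPQ3 (by rw [hdegw3]; omega)
      (by rw [hdegy3]; omega)
  · -- edge count
    rw [hcfg.2.2.2]
    simp only [Multiset.card_cons]
    rw [Multiset.card_erase_of_mem hcfg.1, Nat.pred_eq_sub_one]
    have h1 : 0 < Multiset.card Q.E := Multiset.card_pos_iff_exists_mem.2 ⟨_, hcfg.1⟩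
    omega
  · -- vertex count
    rw [hcfg.2.2.1, Finset.card_insert_of_notMem hcfg.2.1]

end MGraph
end CfgLemmas


section CountLemmas
namespace MGraph

variable {Q M N' G G' : MGraph} {y p q w c₁ c₂ : ℕ} {n r : ℕ}

lemma hasParallel_iff : HasParallel G ↔ ¬ ∀ e, G.E.count e ≤ 1 := by
  unfold HasParallel
  push_neg
  rfl

lemma count_le_one_subdiv {a b u : ℕ} (hE : G.EdgesIn) (hL : G.Loopless)
    (h : SubdivEdge G a b u G') (hc : ∀ e, G.E.count e ≤ 1) :
    ∀ e, G'.E.count e ≤ 1 := by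
  intro e
  rw [h.E', Multiset.count_cons, Multiset.count_cons]
  have herase : (G.E.erase s(a,b)).count e ≤ G.E.count e :=
    Multiset.count_le_of_le e (Multiset.erase_le _ _)
  have hcc := hc e
  by_cases hu : u ∈ e
  · have h0 : (G.E.erase s(a,b)).count e = 0 := by
      rw [Multiset.count_eq_zero]
      exact fun hmem => h.u_not_mem hE e (mem_of_mem_erase hmem) hu
    have hne : s(a,u) ≠ s(u,b) := by
      intro hh
      rcases sym2_eq.1 hh with ⟨h1, _⟩ | ⟨h1, _⟩
      · exact h.au hE h1
      · exact h.ab hL h1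
    by_cases h1 : e = s(a,u)
    · subst h1
      rw [h0, if_neg hne, if_pos rfl]
    · rw [if_neg h1]
      by_cases h2 : e = s(u,b)
      · subst h2
        rw [h0, if_pos rfl]
      · rw [if_neg h2, h0]
        omega
  · have h1 : e ≠ s(a,u) := fun hh => hu (hh ▸ sym2_mem.2 (Or.inr rfl))
    have h2 : e ≠ s(u,b) := fun hh => hu (hh ▸ sym2_mem.2 (Or.inl rfl))
    rw [if_neg h1, if_neg h2]
    omega

lemma count_le_one_cfg (hE : Q.EdgesIn) (hL : Q.Loopless)
    (hcfg : Cfg Q y p q w M) (hpy : p ≠ y) (hqy : q ≠ y) (hyQ : y ∈ Q.V)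
    (hc : ∀ e, Q.E.count e ≤ 1) : ∀ e, M.E.count e ≤ 1 := by
  intro e
  have hwp : w ≠ p := fun hh => hcfg.2.1 (hh ▸ hE _ hcfg.1 p (sym2_mem.2 (Or.inl rfl)))
  have hwq : w ≠ q := fun hh => hcfg.2.1 (hh ▸ hE _ hcfg.1 q (sym2_mem.2 (Or.inr rfl)))
  have hwy : w ≠ y := fun hh => hcfg.2.1 (hh ▸ hyQ)
  have hpq : p ≠ q := fun hh => hL _ hcfg.1 (Sym2.mk_isDiag_iff.2 hh)
  rw [hcfg.2.2.2, Multiset.count_cons, Multiset.count_cons, Multiset.count_cons]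
  have herase : (Q.E.erase s(p,q)).count e ≤ Q.E.count e :=
    Multiset.count_le_of_le e (Multiset.erase_le _ _)
  have hcc := hc e
  by_cases hu : w ∈ e
  · have h0 : (Q.E.erase s(p,q)).count e = 0 := by
      rw [Multiset.count_eq_zero]
      exact fun hmem => hcfg.2.1 (hE e (mem_of_mem_erase hmem) w hu)
    have d1 : s(w,y) ≠ s(p,w) := by
      intro hh
      rcases sym2_eq.1 hh with ⟨h1, _⟩ | ⟨_, h2⟩
      · exact hwp h1
      · exact hpy h2.symm
    have d2 : s(w,y) ≠ s(w,q) := by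
      intro hh
      rcases sym2_eq.1 hh with ⟨_, h2⟩ | ⟨h1, _⟩
      · exact hqy h2.symm
      · exact hwq h1
    have d3 : s(p,w) ≠ s(w,q) := by
      intro hh
      rcases sym2_eq.1 hh with ⟨h1, _⟩ | ⟨h1, _⟩
      · exact hwp h1.symm
      · exact hpq h1
    by_cases e1 : e = s(w,y)
    · subst e1
      rw [h0, if_pos rfl, if_neg d1, if_neg d2]
    · rw [if_neg e1]
      by_cases e2 : e = s(p,w)
      · subst e2
        rw [h0, if_pos rfl, if_neg d3]
      · rw [if_neg e2]
        by_cases e3 : e = s(w,q)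
        · subst e3
          rw [h0, if_pos rfl]
        · rw [if_neg e3, h0]
          omega
  · have e1 : e ≠ s(w,y) := fun hh => hu (hh ▸ sym2_mem.2 (Or.inl rfl))
    have e2 : e ≠ s(p,w) := fun hh => hu (hh ▸ sym2_mem.2 (Or.inr rfl))
    have e3 : e ≠ s(w,q) := fun hh => hu (hh ▸ sym2_mem.2 (Or.inl rfl))
    rw [if_neg e1, if_neg e2, if_neg e3]
    omega

/-- handshake over a multiset of edges -/
lemma handshake_aux (V : Finset ℕ) :
    ∀ (E : Multiset (Sym2 ℕ)), (∀ e ∈ E, ¬ e.IsDiag ∧ ∀ x ∈ e, x ∈ V) →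
      (∑ v ∈ V, degE E v) = 2 * Multiset.card E := by
  intro E
  induction E using Multiset.induction_on with
  | empty => intro _; simp [degE]
  | cons e E ih =>
    intro hyp
    have he := hyp e (Multiset.mem_cons_self _ _)
    have hEE : ∀ f ∈ E, ¬ f.IsDiag ∧ ∀ x ∈ f, x ∈ V :=
      fun f hf => hyp f (Multiset.mem_cons_of_mem hf)
    have hsum : (∑ v ∈ V, (if v ∈ e then (1:ℕ) else 0)) = 2 := by
      induction e using Sym2.ind with
      | _ α β =>
        have hαβ : α ≠ β := fun hh => he.1 (Sym2.mk_isDiag_iff.2 hh)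
        have hα : α ∈ V := he.2 α (sym2_mem.2 (Or.inl rfl))
        have hβ : β ∈ V := he.2 β (sym2_mem.2 (Or.inr rfl))
        have hset : ∀ v : ℕ, (if v ∈ s(α,β) then (1:ℕ) else 0)
            = if v ∈ ({α, β} : Finset ℕ) then 1 else 0 := by
          intro v
          by_cases hv : v = α <;> by_cases hv2 : v = β <;>
            simp [sym2_mem, hv, hv2]
        rw [Finset.sum_congr rfl (fun v _ => hset v), Finset.sum_ite_mem]
        have hsub : ({α, β} : Finset ℕ) ⊆ V := by
          intro z hz
          rcases Finset.mem_insert.1 hz with rfl | hz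
          · exact hα
          · rw [Finset.mem_singleton] at hz
            exact hz ▸ hβ
        rw [Finset.inter_eq_right.2 hsub, Finset.sum_const, Finset.card_pair hαβ]
        simp
    calc (∑ v ∈ V, degE (e ::ₘ E) v)
        = ∑ v ∈ V, ((if v ∈ e then 1 else 0) + degE E v) := by
          refine Finset.sum_congr rfl fun v _ => degE_cons e E v
      _ = (∑ v ∈ V, (if v ∈ e then (1:ℕ) else 0)) + ∑ v ∈ V, degE E v := by
          rw [Finset.sum_add_distrib]
      _ = 2 + 2 * Multiset.card E := by rw [hsum, ih hEE]
      _ = 2 * Multiset.card (e ::ₘ E) := by rw [Multiset.card_cons]; ring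

/-- vertex count of a binary tier-r network -/
lemma network_vcard (hn : 3 ≤ n) (h : IsNetworkR n r G) : G.V.card + 2 = 2*n + 2*r := by
  obtain ⟨⟨⟨hE, hL, hC, hne, hdeg, hleaf⟩, hP⟩, htier⟩ := h
  have hh : (∑ v ∈ G.V, degE G.E v) = 2 * Multiset.card G.E :=
    handshake_aux G.V G.E (fun e he => ⟨hL e he, hE e he⟩)
  have hsplit := Finset.sum_filter_add_sum_filter_not G.V (fun v => G.deg v = 1)
    (fun v => G.deg v)
  have h1 : (∑ v ∈ G.V.filter (fun v => G.deg v = 1), G.deg v)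
      = (G.V.filter (fun v => G.deg v = 1)).card := by
    rw [Finset.sum_congr rfl (fun v hv => (Finset.mem_filter.1 hv).2)]
    simp
  have h3 : (∑ v ∈ G.V.filter (fun v => ¬ G.deg v = 1), G.deg v)
      = 3 * (G.V.filter (fun v => ¬ G.deg v = 1)).card := by
    rw [Finset.sum_congr rfl (fun v hv => by
      obtain ⟨hv1, hv2⟩ := Finset.mem_filter.1 hv
      exact (hdeg v hv1).resolve_left hv2)]
    simp [Nat.mul_comm]
  have hcardfilters : (G.V.filter (fun v => G.deg v = 1)).card
      + (G.V.filter (fun v => ¬ G.deg v = 1)).card = G.V.card :=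
    Finset.card_filter_add_card_filter_not (p := fun v => G.deg v = 1)
  have hleafcard : (G.V.filter (fun v => G.deg v = 1)).card = n := by
    rw [hleaf, Nat.card_Icc]
    omega
  have hdege : ∀ v, G.deg v = degE G.E v := fun v => rfl
  rw [Finset.sum_congr rfl (fun v _ => (hdege v).symm)] at hh
  rw [h1, h3, hleafcard] at hsplit
  rw [← hsplit] at hh
  rw [hleafcard] at hcardfilters
  omega

end MGraph
end CountLemmas


section DecompLemmas
namespace MGraph

lemma count_erase' (s : Multiset (Sym2 ℕ)) (a e : Sym2 ℕ) :
    (s.erase a).count e = s.count e - (if e = a then 1 else 0) := by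
  by_cases h : e = a
  · subst h; rw [if_pos rfl, Multiset.count_erase_self]
  · rw [if_neg h, Multiset.count_erase_of_ne h]
    omega

lemma filter_pair_decomp {S : Multiset (Sym2 ℕ)} {x p q : ℕ}
    (hfilt : S.filter (fun e => x ∈ e) = s(x,p) ::ₘ {s(x,q)}) :
    S = s(x,p) ::ₘ s(x,q) ::ₘ (S.erase s(x,p)).erase s(x,q) ∧
      ∀ e, x ∈ e → ((S.erase s(x,p)).erase s(x,q)).count e = 0 := by
  have key : ∀ e, x ∈ e → S.count e =
      (if e = s(x,p) then 1 else 0) + (if e = s(x,q) then 1 else 0) := by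
    intro e he
    have h0 : (S.filter (fun e => x ∈ e)).count e = S.count e :=
      Multiset.count_filter_of_pos he
    rw [hfilt, Multiset.count_cons] at h0
    rw [← h0]
    have : ({s(x,q)} : Multiset (Sym2 ℕ)).count e = if e = s(x,q) then 1 else 0 := by
      rw [Multiset.count_singleton]
    rw [this]
    omega
  constructor
  · rw [Multiset.ext]
    intro e
    rw [Multiset.count_cons, Multiset.count_cons, count_erase', count_erase']
    by_cases hx : x ∈ e
    · have hk := key e hx
      omega
    · have h1 : e ≠ s(x,p) := fun hh => hx (hh ▸ sym2_mem.2 (Or.inl rfl))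
      have h2 : e ≠ s(x,q) := fun hh => hx (hh ▸ sym2_mem.2 (Or.inl rfl))
      rw [if_neg h1, if_neg h2]
      omega
  · intro e he
    rw [count_erase', count_erase', key e he]
    omega

lemma removeEdge_cfg {N N' : MGraph} {x y : ℕ}
    (hE : N.EdgesIn) (hL : N.Loopless) (hrem : RemoveEdge N x y N') :
    ∃ Q c₁ c₂ p q, SubdivEdge N' c₁ c₂ y Q ∧ Cfg Q y p q x N := by
  obtain ⟨hxy, G₁, hs1, hs2⟩ := hrem
  obtain ⟨p, q, hfilt, hV1, hE1⟩ := hs1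
  obtain ⟨c₁, c₂, hfilt2, hV2, hE2⟩ := hs2
  have hxny : x ≠ y := fun hh => hL _ hxy (Sym2.mk_isDiag_iff.2 hh)
  have hxV : x ∈ N.V := hE _ hxy x (sym2_mem.2 (Or.inl rfl))
  have hyV : y ∈ N.V := hE _ hxy y (sym2_mem.2 (Or.inr rfl))
  have hV1' : G₁.V = N.V.erase x := hV1
  have hyG1 : y ∈ G₁.V := by
    rw [hV1']
    exact Finset.mem_erase.2 ⟨Ne.symm hxny, hyV⟩
  have hfilt' : (N.E.erase s(x,y)).filter (fun e => x ∈ e) = s(x,p) ::ₘ {s(x,q)} := hfilt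
  have hE1' : G₁.E = s(p,q) ::ₘ ((N.E.erase s(x,y)).erase s(x,p)).erase s(x,q) := hE1
  obtain ⟨hdec1, _⟩ := filter_pair_decomp hfilt'
  obtain ⟨hdec2, _⟩ := filter_pair_decomp (S := G₁.E) (x := y) (p := c₁) (q := c₂) hfilt2
  refine ⟨G₁, c₁, c₂, p, q, ⟨?_, ?_, ?_, ?_⟩, ⟨?_, ?_, ?_, ?_⟩⟩
  · rw [hE2]; exact Multiset.mem_cons_self _ _
  · rw [hV2]; exact Finset.notMem_erase _ _
  · rw [hV2, Finset.insert_erase hyG1]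
  · have hrest : N'.E.erase s(c₁,c₂) = (G₁.E.erase s(y,c₁)).erase s(y,c₂) := by
      rw [hE2, Multiset.erase_cons_head]
    rw [hrest, show s(c₁,y) = s(y,c₁) from sym2_swap, show s(y,c₂) = s(y,c₂) from rfl]
    exact hdec2
  · rw [hE1]; exact Multiset.mem_cons_self _ _
  · rw [hV1']; exact Finset.notMem_erase _ _
  · rw [hV1', Finset.insert_erase hxV]
  · have hrest : G₁.E.erase s(p,q) =
        ((N.E.erase s(x,y)).erase s(x,p)).erase s(x,q) := by
      rw [hE1', Multiset.erase_cons_head]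
    rw [hrest, show s(p,x) = s(x,p) from sym2_swap, ← hdec1]
    exact (Multiset.cons_erase hxy).symm

end MGraph
end DecompLemmas


section StepLemmas
namespace MGraph

variable {Q M N' : MGraph} {y p q w b c₁ c₂ : ℕ}

lemma Cfg.suppress (hE : Q.EdgesIn) (h : Cfg Q y p q w M) :
    Suppress (M.deleteEdge s(w,y)) w Q := by
  have hDE : (M.deleteEdge s(w,y)).E = s(p,w) ::ₘ s(w,q) ::ₘ Q.E.erase s(p,q) := by
    show M.E.erase _ = _
    rw [h.2.2.2, Multiset.erase_cons_head]
  refine ⟨p, q, ?_, ?_, ?_⟩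
  · rw [hDE, Multiset.filter_cons, Multiset.filter_cons]
    have h1 : w ∈ s(p,w) := sym2_mem.2 (Or.inr rfl)
    have h2 : w ∈ s(w,q) := sym2_mem.2 (Or.inl rfl)
    have h0 : (Q.E.erase s(p,q)).filter (fun e => w ∈ e) = 0 := by
      rw [Multiset.filter_eq_nil]
      exact fun e he hm => h.2.1 (hE e (mem_of_mem_erase he) w hm)
    rw [if_pos h1, if_pos h2, h0, show s(p,w) = s(w,p) from sym2_swap]
    simp
  · show Q.V = M.V.erase w
    rw [h.2.2.1, Finset.erase_insert h.2.1]
  · show Q.E = s(p,q) ::ₘ (((M.deleteEdge s(w,y)).E.erase s(w,p)).erase s(w,q))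
    rw [hDE, show s(w,p) = s(p,w) from sym2_swap, Multiset.erase_cons_head,
      Multiset.erase_cons_head]
    exact (Multiset.cons_erase h.1).symm

lemma subdiv_suppress (hE' : N'.EdgesIn) (hsub : SubdivEdge N' c₁ c₂ y Q) :
    Suppress Q y N' := by
  refine ⟨c₁, c₂, ?_, ?_, ?_⟩
  · rw [hsub.E', Multiset.filter_cons, Multiset.filter_cons]
    have h1 : y ∈ s(c₁,y) := sym2_mem.2 (Or.inr rfl)
    have h2 : y ∈ s(y,c₂) := sym2_mem.2 (Or.inl rfl)
    have h0 : (N'.E.erase s(c₁,c₂)).filter (fun e => y ∈ e) = 0 := by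
      rw [Multiset.filter_eq_nil]
      exact fun e he hm => hsub.nu (hE' e (mem_of_mem_erase he) y hm)
    rw [if_pos h1, if_pos h2, h0, show s(c₁,y) = s(y,c₁) from sym2_swap]
    simp
  · show N'.V = Q.V.erase y
    rw [hsub.V', Finset.erase_insert hsub.nu]
  · show N'.E = s(c₁,c₂) ::ₘ ((Q.E.erase s(y,c₁)).erase s(y,c₂))
    rw [hsub.E', show s(y,c₁) = s(c₁,y) from sym2_swap, Multiset.erase_cons_head,
      Multiset.erase_cons_head]
    exact (Multiset.cons_erase hsub.mem_ab).symm

lemma cfg_finish {t : ℕ} (hE' : N'.EdgesIn) (hEQ : Q.EdgesIn)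
    (hsub : SubdivEdge N' c₁ c₂ y Q) (h : Cfg Q y p q w M)
    (ht : t = p ∨ t = q) (hty : s(y,t) ∈ Q.E.erase s(p,q)) :
    NNIminusAt M s(w,y) N' := by
  refine ⟨w, y, t, rfl, ?_, ?_, ?_⟩
  · rw [h.2.2.2]
    rcases ht with rfl | rfl
    · exact Multiset.mem_cons.2 (Or.inr (Multiset.mem_cons.2 (Or.inl sym2_swap)))
    · exact Multiset.mem_cons.2 (Or.inr (Multiset.mem_cons.2 (Or.inr
        (Multiset.mem_cons.2 (Or.inl rfl)))))
  · rw [h.2.2.2]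
    exact Multiset.mem_cons.2 (Or.inr (Multiset.mem_cons.2 (Or.inr
      (Multiset.mem_cons.2 (Or.inr hty)))))
  · exact ⟨by rw [h.2.2.2]; exact Multiset.mem_cons_self _ _,
      Q, h.suppress hEQ, subdiv_suppress hE' hsub⟩

lemma cfg_step (hEQ : Q.EdgesIn) (hLQ : Q.Loopless) (hyQ : y ∈ Q.V)
    (h : Cfg Q y p q w M) (hqy : q ≠ y) (hdq : Q.deg q = 3)
    (hqb : s(q,b) ∈ Q.E) :
    ∃ M', Cfg Q y q b w M' ∧ NNIzeroAt M s(w,y) M' s(w,y) := by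
  have hwy : w ≠ y := fun hh => h.2.1 (hh ▸ hyQ)
  have hqV : q ∈ Q.V := hEQ _ h.1 q (sym2_mem.2 (Or.inr rfl))
  have hbV : b ∈ Q.V := hEQ _ hqb b (sym2_mem.2 (Or.inr rfl))
  have hqw : q ≠ w := fun hh => h.2.1 (hh ▸ hqV)
  have hbw : b ≠ w := fun hh => h.2.1 (hh ▸ hbV)
  refine ⟨⟨insert w Q.V, s(w,y) ::ₘ s(q,w) ::ₘ s(w,b) ::ₘ Q.E.erase s(q,b)⟩,
    ⟨hqb, h.2.1, rfl, rfl⟩, ?_⟩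
  refine ⟨w, q, y, b, w, Q, ⟨insert w Q.V, s(q,w) ::ₘ s(w,b) ::ₘ Q.E.erase s(q,b)⟩,
    rfl, rfl, ?_, ?_, ?_, ?_, Ne.symm hqy, hbw, h.suppress hEQ, ⟨hqb, h.2.1, rfl, rfl⟩,
    rfl, rfl⟩
  · rw [h.2.2.2]; exact Multiset.mem_cons_self _ _
  · rw [h.2.2.2, Multiset.erase_cons_head]
    exact Multiset.mem_cons.2 (Or.inr (Multiset.mem_cons.2 (Or.inl rfl)))
  · rintro ⟨_, hd⟩
    rw [h.deg_w hEQ hwy] at hd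
    omega
  · rintro ⟨_, hd⟩
    rw [h.deg_other hEQ hLQ hqw, if_neg hqy, hdq] at hd
    omega

end MGraph
end StepLemmas


section IndLemmas
namespace MGraph

/-- there is a walk of length ≤ m+1 from q to y through degree-3 vertices -/
def Good (Q : MGraph) (y : ℕ) : ℕ → ℕ → Prop
  | 0, q => s(q,y) ∈ Q.E
  | (m+1), q => Good Q y m q ∨ ∃ b, s(q,b) ∈ Q.E ∧ b ≠ y ∧ Q.deg b = 3 ∧ Good Q y m b

lemma exists_other_edge {Q : MGraph} {q y : ℕ} (hdq : Q.deg q = 3)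
    (hdy : Q.deg y = 2) : ∃ b, s(q,b) ∈ Q.E ∧ b ≠ y := by
  by_contra hcon
  push_neg at hcon
  have hall : ∀ e ∈ Q.E.filter (fun e => q ∈ e), s(q,y) = e := by
    intro e he
    obtain ⟨heE, heq⟩ := Multiset.mem_filter.1 he
    induction e using Sym2.ind with
    | _ α β =>
      rcases sym2_mem.1 heq with rfl | rfl
      · rw [hcon β heE]
      · have hswap : s(q, α) ∈ Q.E := by rwa [sym2_swap]
        rw [hcon α hswap, sym2_swap]
  have hcount : (Q.E.filter (fun e => q ∈ e)).count s(q,y) = 3 := by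
    rw [Multiset.count_eq_card.2 hall]
    exact hdq
  have h1 : Q.E.count s(q,y) = 3 := by
    rw [← Multiset.count_filter_of_pos (p := fun e => q ∈ e)
      (sym2_mem.2 (Or.inl rfl))]
    exact hcount
  have h2 : Q.E.count s(q,y) ≤ 2 := by
    calc Q.E.count s(q,y) = (Q.E.filter (fun e => y ∈ e)).count s(q,y) :=
        (Multiset.count_filter_of_pos (p := fun e => y ∈ e)
          (sym2_mem.2 (Or.inr rfl))).symm
      _ ≤ Multiset.card (Q.E.filter (fun e => y ∈ e)) := Multiset.count_le_card _ _
      _ = 2 := hdy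
  omega

lemma cfg_seq {N' Q : MGraph} {c₁ c₂ y : ℕ}
    (hE' : N'.EdgesIn) (hEQ : Q.EdgesIn) (hLQ : Q.Loopless) (hyQ : y ∈ Q.V)
    (hdegy : Q.deg y = 2)
    (hsub : SubdivEdge N' c₁ c₂ y Q)
    (D : MGraph → Prop)
    (hD : ∀ p q w M, Cfg Q y p q w M → p ≠ y → q ≠ y → D M) :
    ∀ m, ∀ p q w M, Cfg Q y p q w M → q ≠ y → Q.deg q = 3 → Good Q y m q →
    ∃ k ≤ m + 1, ∃ M',
      SeqOn (fun pr qr : MGraph × Sym2 ℕ => NNIzeroAt pr.1 pr.2 qr.1 qr.2)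
        (fun pr : MGraph × Sym2 ℕ => D pr.1) k (M, s(w,y)) (M', s(w,y)) ∧
      NNIminusAt M' s(w,y) N' := by
  intro m
  induction m with
  | zero =>
    intro p q w M hcfg hqy hdq hGood
    have hB : s(q,y) ∈ Q.E := hGood
    by_cases hA : s(q,y) ∈ Q.E.erase s(p,q)
    · exact ⟨0, by omega, M, rfl,
        cfg_finish hE' hEQ hsub hcfg (Or.inr rfl)
          (by rwa [show s(y,q) = s(q,y) from sym2_swap])⟩
    · -- bubble case
      obtain ⟨b, hqb, hby⟩ := exists_other_edge hdq hdegy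
      obtain ⟨M₁, hcfg₁, hstep⟩ := cfg_step hEQ hLQ hyQ hcfg hqy hdq hqb
      have hfin : NNIminusAt M₁ s(w,y) N' := by
        refine cfg_finish hE' hEQ hsub hcfg₁ (Or.inl rfl) ?_
        refine (Multiset.mem_erase_of_ne ?_).2
          (by rwa [show s(y,q) = s(q,y) from sym2_swap])
        intro hh
        rcases sym2_eq.1 hh with ⟨h1, _⟩ | ⟨h1, _⟩
        · exact hqy h1.symm
        · exact hby h1.symm
      exact ⟨1, by omega, M₁, ⟨(M₁, s(w,y)), hstep,
        hD q b w M₁ hcfg₁ hqy hby, rfl⟩, hfin⟩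
  | succ m ih =>
    intro p q w M hcfg hqy hdq hGood
    by_cases hA : s(q,y) ∈ Q.E.erase s(p,q)
    · exact ⟨0, by omega, M, rfl,
        cfg_finish hE' hEQ hsub hcfg (Or.inr rfl)
          (by rwa [show s(y,q) = s(q,y) from sym2_swap])⟩
    · by_cases hB : s(q,y) ∈ Q.E
      · obtain ⟨b, hqb, hby⟩ := exists_other_edge hdq hdegy
        obtain ⟨M₁, hcfg₁, hstep⟩ := cfg_step hEQ hLQ hyQ hcfg hqy hdq hqb
        have hfin : NNIminusAt M₁ s(w,y) N' := by
          refine cfg_finish hE' hEQ hsub hcfg₁ (Or.inl rfl) ?_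
          refine (Multiset.mem_erase_of_ne ?_).2
            (by rwa [show s(y,q) = s(q,y) from sym2_swap])
          intro hh
          rcases sym2_eq.1 hh with ⟨h1, _⟩ | ⟨h1, _⟩
          · exact hqy h1.symm
          · exact hby h1.symm
        exact ⟨1, by omega, M₁, ⟨(M₁, s(w,y)), hstep,
          hD q b w M₁ hcfg₁ hqy hby, rfl⟩, hfin⟩
      · rcases hGood with hG | ⟨b, hqb, hby, hdb, hGb⟩
        · obtain ⟨k, hk, M', hseq, hfin⟩ := ih p q w M hcfg hqy hdq hG
          exact ⟨k, by omega, M', hseq, hfin⟩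
        · obtain ⟨M₁, hcfg₁, hstep⟩ := cfg_step hEQ hLQ hyQ hcfg hqy hdq hqb
          obtain ⟨k, hk, M', hseq, hfin⟩ := ih q b w M₁ hcfg₁ hby hdb hGb
          exact ⟨k + 1, by omega, M', ⟨(M₁, s(w,y)), hstep,
            hD q b w M₁ hcfg₁ hqy hby, hseq⟩, hfin⟩

end MGraph
end IndLemmas


section PathLemmas
namespace MGraph

lemma reach_to_good {Q : MGraph} {y q : ℕ}
    (hEQ : Q.EdgesIn)
    (hdeg : ∀ v ∈ Q.V, v ≠ y → Q.deg v = 1 ∨ Q.deg v = 3)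
    (hqV : q ∈ Q.V)
    (hreach : Q.Reach q y) (hqy : q ≠ y) :
    ∃ m ≤ Q.V.card, Good Q y m q := by
  classical
  let SG : SimpleGraph ℕ :=
    { Adj := fun u v => u ≠ v ∧ Q.Adj u v
      symm := by
        constructor
        rintro u v ⟨h1, h2⟩
        exact ⟨h1.symm, adj_symm h2⟩
      loopless := ⟨fun u h => h.1 rfl⟩ }
  have conv : ∀ a b : ℕ, Relation.ReflTransGen Q.Adj a b → SG.Reachable a b := by
    intro a b h
    induction h with
    | refl => exact SimpleGraph.Reachable.refl _
    | tail hab hbc ih =>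
      rename_i b' c'
      by_cases hbc' : b' = c'
      · rwa [← hbc']
      · exact ih.trans (SimpleGraph.Adj.reachable ⟨hbc', hbc⟩)
  have hreachSG : SG.Reachable q y := conv q y hreach
  have hsup : ∀ (a b : ℕ) (Wb : SG.Walk a b), a ∈ Q.V → ∀ z ∈ Wb.support, z ∈ Q.V := by
    intro a b Wb
    induction Wb with
    | nil =>
      intro ha z hz
      rw [SimpleGraph.Walk.support_nil, List.mem_singleton] at hz
      rwa [hz]
    | cons h W' ih =>
      intro ha z hz
      rw [SimpleGraph.Walk.support_cons] at hz
      rcases List.mem_cons.1 hz with rfl | hz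
      · exact ha
      · exact ih (hEQ _ h.2 _ (sym2_mem.2 (Or.inr rfl))) z hz
  have key : ∀ (y' q' : ℕ) (W : SG.Walk q' y'),
      (∀ v ∈ Q.V, v ≠ y' → Q.deg v = 1 ∨ Q.deg v = 3) → W.IsPath → q' ≠ y' →
      ∃ m, m + 1 ≤ W.length ∧ Good Q y' m q' := by
    intro y' q' W
    induction W with
    | nil => intro _ _ h; exact absurd rfl h
    | cons h W' ih =>
      rename_i a c yy
      intro hdeg' hP hay
      obtain ⟨hP', hnot⟩ := (SimpleGraph.Walk.cons_isPath_iff h W').1 hP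
      by_cases hcy : c = yy
      · subst hcy
        refine ⟨0, by rw [SimpleGraph.Walk.length_cons]; omega, ?_⟩
        exact h.2
      · cases W' with
        | nil => exact absurd rfl hcy
        | cons h₂ W'' =>
          rename_i d
          have hdsup : d ∈ (SimpleGraph.Walk.cons h₂ W'').support := by
            rw [SimpleGraph.Walk.support_cons]
            exact List.mem_cons.2 (Or.inr (SimpleGraph.Walk.start_mem_support W''))
          have had : a ≠ d := fun hh => hnot (hh ▸ hdsup)
          have hcV : c ∈ Q.V := hEQ _ h.2 _ (sym2_mem.2 (Or.inr rfl))
          have hne : s(a,c) ≠ s(c,d) := by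
            intro hh
            rcases sym2_eq.1 hh with ⟨h1, _⟩ | ⟨h1, _⟩
            · exact h.1 h1
            · exact had h1
          have hdc : Q.deg c = 3 := by
            rcases hdeg' c hcV hcy with h1 | h3
            · exfalso
              have := degE_two_le (E := Q.E) h.2 h₂.2 hne
                (sym2_mem.2 (Or.inr rfl)) (sym2_mem.2 (Or.inl rfl))
              rw [deg_eq_degE] at h1
              omega
            · exact h3
          obtain ⟨m', hm', hG⟩ := ih hdeg' hP' hcy
          exact ⟨m' + 1, by rw [SimpleGraph.Walk.length_cons]; omega,
            Or.inr ⟨c, h.2, hcy, hdc, hG⟩⟩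
  obtain ⟨W0⟩ := hreachSG
  obtain ⟨m, hm, hGood⟩ := key y q W0.toPath.1 hdeg W0.toPath.2 hqy
  refine ⟨m, ?_, hGood⟩
  have h1 : (W0.toPath.1.support).length = W0.toPath.1.length + 1 :=
    SimpleGraph.Walk.length_support W0.toPath.1
  have hnd : (W0.toPath.1.support).Nodup := W0.toPath.2.support_nodup
  have hsub2 : (W0.toPath.1.support).toFinset ⊆ Q.V :=
    fun z hz => hsup q y W0.toPath.1 hqV z (List.mem_toFinset.1 hz)
  have h2 : (W0.toPath.1.support).toFinset.card = (W0.toPath.1.support).length :=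
    List.toFinset_card_of_nodup hnd
  have h3 := Finset.card_le_card hsub2
  omega

end MGraph
end PathLemmas


section FinalAux
namespace MGraph

variable {Q M N' : MGraph} {y p q w : ℕ}

lemma cfg_cards (hcfg : Cfg Q y p q w M) :
    Multiset.card M.E = Multiset.card Q.E + 2 ∧ M.V.card = Q.V.card + 1 := by
  constructor
  · rw [hcfg.2.2.2]
    simp only [Multiset.card_cons]
    rw [Multiset.card_erase_of_mem hcfg.1, Nat.pred_eq_sub_one]
    have h1 : 0 < Multiset.card Q.E := Multiset.card_pos_iff_exists_mem.2 ⟨_, hcfg.1⟩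
    omega
  · rw [hcfg.2.2.1, Finset.card_insert_of_notMem hcfg.2.1]

lemma two_leaf_contra {G : MGraph} {n a b : ℕ} (hn : 3 ≤ n) (hC : G.Conn)
    (hleafset : G.V.filter (fun v => G.deg v = 1) = Finset.Icc 1 n)
    (hE : G.EdgesIn) (hab : s(a,b) ∈ G.E) (hda : G.deg a = 1)
    (hdb : G.deg b = 1) : False := by
  have hconf : ∀ t, G.Reach a t → t = a ∨ t = b := by
    intro t ht
    induction ht with
    | refl => exact Or.inl rfl
    | tail hst hadj ih =>
      rename_i s t
      have hkey : ∀ z d, G.deg z = 1 → s(a,b) ∈ G.E → z = a ∨ z = b →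
          s(z,d) ∈ G.E → d = a ∨ d = b := by
        intro z d hdz hab' hz hzd
        have hzb : s(z, a) ∈ G.E ∨ s(z, b) ∈ G.E := by
          rcases hz with rfl | rfl
          · exact Or.inr hab'
          · exact Or.inl (by rwa [sym2_swap])
        rcases hzb with hze | hze
        all_goals {
          by_cases hne : s(z,d) = s(z,a) ∨ s(z,d) = s(z,b)
          · rcases hne with hne | hne
            · rcases sym2_eq.1 hne with ⟨_, h2⟩ | ⟨h1, h2⟩
              · exact Or.inl h2
              · exact Or.inl (h2.trans h1)
            · rcases sym2_eq.1 hne with ⟨_, h2⟩ | ⟨h1, h2⟩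
              · exact Or.inr h2
              · exact Or.inr (h2.trans h1)
          · push_neg at hne
            exfalso
            have hne' : s(z,d) ≠ s(z,a) ∧ s(z,d) ≠ s(z,b) := hne
            have h2 := degE_two_le (E := G.E) hzd hze ?_ (sym2_mem.2 (Or.inl rfl))
              (sym2_mem.2 (Or.inl rfl))
            · rw [deg_eq_degE] at hdz
              omega
            · first
              | exact hne'.1
              | exact hne'.2
        }
      rcases ih with rfl | rfl
      · exact hkey _ _ hda hab (Or.inl rfl) hadj
      · exact hkey _ _ hdb hab (Or.inr rfl) hadj
  have hv0 : ∃ v₀, v₀ ∈ Finset.Icc 1 n ∧ v₀ ≠ a ∧ v₀ ≠ b := by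
    by_cases c1 : 1 = a ∨ 1 = b
    · by_cases c2 : 2 = a ∨ 2 = b
      · refine ⟨3, Finset.mem_Icc.2 (by omega), ?_, ?_⟩ <;>
          (rcases c1 with h|h <;> rcases c2 with h'|h' <;> omega)
      · push_neg at c2
        exact ⟨2, Finset.mem_Icc.2 (by omega), c2.1, c2.2⟩
    · push_neg at c1
      exact ⟨1, Finset.mem_Icc.2 (by omega), c1.1, c1.2⟩
  obtain ⟨v₀, hv₀, hva, hvb⟩ := hv0
  rw [← hleafset] at hv₀
  have hv₀V : v₀ ∈ G.V := (Finset.mem_filter.1 hv₀).1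
  have haV : a ∈ G.V := hE _ hab a (sym2_mem.2 (Or.inl rfl))
  rcases hconf v₀ (hC a haV v₀ hv₀V) with rfl | rfl
  · exact hva rfl
  · exact hvb rfl

end MGraph
end FinalAux


section MainSide
namespace MGraph

lemma main_side {n r : ℕ} {N N' Q : MGraph} {c₁ c₂ y x p₀ q₀ : ℕ}
    (hn : 3 ≤ n) (hN' : IsNetwork n N') (hNr : IsNetworkR n r N)
    (hsub : SubdivEdge N' c₁ c₂ y Q) (hcfgN : Cfg Q y p₀ q₀ x N)
    (hq0y : q₀ ≠ y) (hdq0 : Q.deg q₀ = 3) :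
    (∃ k ≤ 5 * (n + r + 1), ∃ M',
        SeqOn (fun pr qr : MGraph × Sym2 ℕ => NNIzeroAt pr.1 pr.2 qr.1 qr.2)
          (fun pr : MGraph × Sym2 ℕ => IsNetworkR n r pr.1) k
          (N, s(x,y)) (M', s(x,y)) ∧
        NNIminusAt M' s(x,y) N') ∧
    (¬ HasParallel N' →
      ∃ k ≤ 5 * (n + r + 1), ∃ M',
        SeqOn (fun pr qr : MGraph × Sym2 ℕ => NNIzeroAt pr.1 pr.2 qr.1 qr.2)
          (fun pr : MGraph × Sym2 ℕ => IsNetworkR n r pr.1 ∧ ¬ HasParallel pr.1) k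
          (N, s(x,y)) (M', s(x,y)) ∧
        NNIminusAt M' s(x,y) N') := by
  have hN'' := hN'
  obtain ⟨⟨hE', hL', hC', hne', hdeg', hleaf'⟩, hP'⟩ := hN'
  have hEQ : Q.EdgesIn := hsub.edgesIn hE'
  have hLQ : Q.Loopless := hsub.loopless hE' hL'
  have hCQ : Q.Conn := hsub.conn hE' hC'
  have hyQ : y ∈ Q.V := hsub.V' ▸ Finset.mem_insert_self _ _
  have hdegy : Q.deg y = 2 := hsub.deg_u hE'
  have hdegQ : ∀ v ∈ Q.V, v ≠ y → Q.deg v = 1 ∨ Q.deg v = 3 := by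
    intro v hv hvy
    rw [hsub.V'] at hv
    rcases Finset.mem_insert.1 hv with rfl | hv
    · exact absurd rfl hvy
    · rw [hsub.deg_other hE' hL' hvy]
      exact hdeg' v hv
  have hq0V : q₀ ∈ Q.V := hEQ _ hcfgN.1 q₀ (sym2_mem.2 (Or.inr rfl))
  obtain ⟨m, hm, hGood⟩ := reach_to_good hEQ hdegQ hq0V (hCQ q₀ hq0V y hyQ) hq0y
  obtain ⟨hcEN, hcVN⟩ := cfg_cards hcfgN
  have hvc := network_vcard hn hNr
  have hQVcard : Q.V.card + 1 = N.V.card := hcVN.symm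
  have hbound : m + 1 ≤ 5 * (n + r + 1) := by omega
  constructor
  · have hD1 : ∀ p' q' w' M, Cfg Q y p' q' w' M → p' ≠ y → q' ≠ y →
        IsNetworkR n r M := by
      intro p' q' w' M hc hp hq
      obtain ⟨hNet, hcE, hcV⟩ := cfg_network hn hN'' hsub hc hp hq
      refine ⟨hNet, ?_⟩
      have := hNr.2
      omega
    obtain ⟨k, hk, M', hseq, hfin⟩ := cfg_seq hE' hEQ hLQ hyQ hdegy hsub _ hD1 m
      p₀ q₀ x N hcfgN hq0y hdq0 hGood
    exact ⟨k, by omega, M', hseq, hfin⟩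
  · intro hnp'
    have hcN' : ∀ e, N'.E.count e ≤ 1 := by
      by_contra h
      exact hnp' (hasParallel_iff.2 h)
    have hcQ : ∀ e, Q.E.count e ≤ 1 := count_le_one_subdiv hE' hL' hsub hcN'
    have hD2 : ∀ p' q' w' M, Cfg Q y p' q' w' M → p' ≠ y → q' ≠ y →
        IsNetworkR n r M ∧ ¬ HasParallel M := by
      intro p' q' w' M hc hp hq
      obtain ⟨hNet, hcE, hcV⟩ := cfg_network hn hN'' hsub hc hp hq
      refine ⟨⟨hNet, ?_⟩, ?_⟩
      · have := hNr.2
        omega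
      · intro hpar
        rw [hasParallel_iff] at hpar
        exact hpar (count_le_one_cfg hEQ hLQ hc hp hq hyQ hcQ)
    obtain ⟨k, hk, M', hseq, hfin⟩ := cfg_seq hE' hEQ hLQ hyQ hdegy hsub _ hD2 m
      p₀ q₀ x N hcfgN hq0y hdq0 hGood
    exact ⟨k, by omega, M', hseq, hfin⟩

end MGraph
end MainSide

/-- For n ≥ 3, a single PR⁻ removing the edge e = {x,y} of N
(reticulation number r) can be replaced by an NNI⁰-sequence that only moves e,
followed by one NNI⁻ removing it, of total length O(n+r); if neither N nor N'
has parallel edges, neither do the intermediate networks. -/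
theorem prm_to_nni :
    ∃ c : ℕ, ∀ (n r : ℕ) (N N' : MGraph) (x y : ℕ),
      3 ≤ n → IsNetworkR n r N → IsNetwork n N' → RemoveEdge N x y N' →
      (∃ k ≤ c * (n + r + 1), ∃ (M : MGraph) (f' : Sym2 ℕ),
        SeqOn (fun p q : MGraph × Sym2 ℕ => NNIzeroAt p.1 p.2 q.1 q.2)
          (fun p : MGraph × Sym2 ℕ => IsNetworkR n r p.1) k
          (N, s(x, y)) (M, f') ∧
        NNIminusAt M f' N') ∧
      (¬ HasParallel N → ¬ HasParallel N' →
        ∃ k ≤ c * (n + r + 1), ∃ (M : MGraph) (f' : Sym2 ℕ),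
        SeqOn (fun p q : MGraph × Sym2 ℕ => NNIzeroAt p.1 p.2 q.1 q.2)
          (fun p : MGraph × Sym2 ℕ => IsNetworkR n r p.1 ∧ ¬ HasParallel p.1) k
          (N, s(x, y)) (M, f') ∧
        NNIminusAt M f' N') := by
  refine ⟨5, ?_⟩
  intro n r N N' x y hn hNr hN' hrem
  have hEN : N.EdgesIn := hNr.1.1.1
  have hLN : N.Loopless := hNr.1.1.2.1
  obtain ⟨Q, c₁, c₂, p, q, hsub, hcfg⟩ := removeEdge_cfg hEN hLN hrem
  have hE' : N'.EdgesIn := hN'.1.1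
  have hL' : N'.Loopless := hN'.1.2.1
  have hC' : N'.Conn := hN'.1.2.2.1
  have hdeg' : ∀ v ∈ N'.V, N'.deg v = 1 ∨ N'.deg v = 3 := hN'.1.2.2.2.2.1
  have hleaf' : N'.V.filter (fun v => N'.deg v = 1) = Finset.Icc 1 n :=
    hN'.1.2.2.2.2.2
  have hEQ : Q.EdgesIn := hsub.edgesIn hE'
  have hLQ : Q.Loopless := hsub.loopless hE' hL'
  have hyQ : y ∈ Q.V := hsub.V' ▸ Finset.mem_insert_self _ _
  have hxQ : x ∉ Q.V := hcfg.2.1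
  have hpV : p ∈ Q.V := hEQ _ hcfg.1 p (sym2_mem.2 (Or.inl rfl))
  have hqV : q ∈ Q.V := hEQ _ hcfg.1 q (sym2_mem.2 (Or.inr rfl))
  have hdegQ : ∀ v ∈ Q.V, v ≠ y → Q.deg v = 1 ∨ Q.deg v = 3 := by
    intro v hv hvy
    rw [hsub.V'] at hv
    rcases Finset.mem_insert.1 hv with rfl | hv
    · exact absurd rfl hvy
    · rw [hsub.deg_other hE' hL' hvy]
      exact hdeg' v hv
  by_cases hq3 : q ≠ y ∧ Q.deg q = 3
  · obtain ⟨h1, h2⟩ := main_side hn hN' hNr hsub hcfg hq3.1 hq3.2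
    refine ⟨?_, fun _ hnp' => ?_⟩
    · obtain ⟨k, hk, M', hseq, hfin⟩ := h1
      exact ⟨k, hk, M', _, hseq, hfin⟩
    · obtain ⟨k, hk, M', hseq, hfin⟩ := h2 hnp'
      exact ⟨k, hk, M', _, hseq, hfin⟩
  by_cases hp3 : p ≠ y ∧ Q.deg p = 3
  · obtain ⟨h1, h2⟩ := main_side hn hN' hNr hsub hcfg.symm hp3.1 hp3.2
    refine ⟨?_, fun _ hnp' => ?_⟩
    · obtain ⟨k, hk, M', hseq, hfin⟩ := h1
      exact ⟨k, hk, M', _, hseq, hfin⟩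
    · obtain ⟨k, hk, M', hseq, hfin⟩ := h2 hnp'
      exact ⟨k, hk, M', _, hseq, hfin⟩
  push_neg at hq3 hp3
  have hbub : ∃ p', p' ≠ y ∧ Q.deg p' = 1 ∧ Cfg Q y p' y x N := by
    by_cases hqy : q = y
    · rw [hqy] at hcfg
      have hpy : p ≠ y := by
        intro hh
        exact hLQ _ hcfg.1 (Sym2.mk_isDiag_iff.2 hh)
      exact ⟨p, hpy, (hdegQ p hpV hpy).resolve_right (hp3 hpy), hcfg⟩
    · by_cases hpy : p = y
      · rw [hpy] at hcfg
        exact ⟨q, hqy, (hdegQ q hqV hqy).resolve_right (hq3 hqy), hcfg.symm⟩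
      · exfalso
        have hdp : Q.deg p = 1 := (hdegQ p hpV hpy).resolve_right (hp3 hpy)
        have hdq : Q.deg q = 1 := (hdegQ q hqV hqy).resolve_right (hq3 hqy)
        have hyn : y ∉ s(p,q) := by
          intro hy
          rcases sym2_mem.1 hy with rfl | rfl
          · exact hpy rfl
          · exact hqy rfl
        have hpq' : s(p,q) ∈ N'.E := by
          have hmem := hcfg.1
          rw [hsub.E'] at hmem
          rcases Multiset.mem_cons.1 hmem with heq | hmem
          · rw [heq] at hyn
            exact absurd (sym2_mem.2 (Or.inr rfl)) hyn
          rcases Multiset.mem_cons.1 hmem with heq | hmem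
          · rw [heq] at hyn
            exact absurd (sym2_mem.2 (Or.inl rfl)) hyn
          · exact mem_of_mem_erase hmem
        have hdp' : N'.deg p = 1 := by
          rw [← hsub.deg_other hE' hL' hpy]
          exact hdp
        have hdq' : N'.deg q = 1 := by
          rw [← hsub.deg_other hE' hL' hqy]
          exact hdq
        exact two_leaf_contra hn hC' hleaf' hE' hpq' hdp' hdq'
  obtain ⟨p', hp'y, hdp'1, hcfgb⟩ := hbub
  have hp'mem : ∃ d₁ d₂, SubdivEdge N' d₁ d₂ y Q ∧ p' = d₁ := by
    have hmem := hcfgb.1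
    rw [hsub.E'] at hmem
    have hor : s(p',y) = s(c₁,y) ∨ s(p',y) = s(y,c₂) := by
      rcases Multiset.mem_cons.1 hmem with heq | hmem
      · exact Or.inl heq
      rcases Multiset.mem_cons.1 hmem with heq | hmem
      · exact Or.inr heq
      · exact absurd (hE' _ (mem_of_mem_erase hmem) y (sym2_mem.2 (Or.inr rfl)))
          hsub.nu
    rcases hor with heq | heq
    · refine ⟨c₁, c₂, hsub, ?_⟩
      rcases sym2_eq.1 heq with ⟨h1, _⟩ | ⟨h1, _⟩
      · exact h1
      · exact absurd h1 hp'y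
    · refine ⟨c₂, c₁, hsub.symm, ?_⟩
      rcases sym2_eq.1 heq with ⟨h1, _⟩ | ⟨h1, _⟩
      · exact absurd h1 hp'y
      · exact h1
  obtain ⟨d1x, d₂, hsubX, hpd⟩ := hp'mem
  subst hpd
  have hp'V : p' ∈ N'.V := hsubX.ha hE'
  have hd₂V : d₂ ∈ N'.V := hsubX.hb hE'
  have hxN' : x ∉ N'.V := fun hh => hxQ (hsub.V' ▸ Finset.mem_insert_of_mem hh)
  have hp'x : p' ≠ x := fun hh => hxN' (hh ▸ hp'V)
  have hd₂x : d₂ ≠ x := fun hh => hxN' (hh ▸ hd₂V)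
  have hyx : y ≠ x := fun hh => hxQ (hh ▸ hyQ)
  have hd12 : p' ≠ d₂ := hsubX.ab hL'
  have hsub₂ : SubdivEdge N' p' d₂ x
      ⟨insert x N'.V, s(p',x) ::ₘ s(x,d₂) ::ₘ N'.E.erase s(p',d₂)⟩ :=
    ⟨hsubX.mem_ab, hxN', rfl, rfl⟩
  have hne2 : s(p',x) ≠ s(x,d₂) := by
    intro hh
    rcases sym2_eq.1 hh with ⟨h1, _⟩ | ⟨h1, _⟩
    · exact hp'x h1
    · exact hd12 h1
  have hQ2e : (s(p',x) ::ₘ s(x,d₂) ::ₘ N'.E.erase s(p',d₂)).erase s(x,d₂)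
      = s(p',x) ::ₘ N'.E.erase s(p',d₂) := by
    rw [Multiset.erase_cons_tail _ hne2, Multiset.erase_cons_head]
  have hQe : Q.E.erase s(p',y) = s(y,d₂) ::ₘ N'.E.erase s(p',d₂) := by
    rw [hsubX.E', Multiset.erase_cons_head]
  have hcfg₂ : Cfg ⟨insert x N'.V, s(p',x) ::ₘ s(x,d₂) ::ₘ N'.E.erase s(p',d₂)⟩
      x x d₂ y N := by
    refine ⟨Multiset.mem_cons.2 (Or.inr (Multiset.mem_cons_self _ _)), ?_, ?_, ?_⟩
    · intro hy
      rcases Finset.mem_insert.1 hy with h | h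
      · exact hyx h
      · exact hsubX.nu h
    · show N.V = insert y (insert x N'.V)
      rw [hcfgb.2.2.1, hsub.V']
      exact Finset.insert_comm x y N'.V
    · show N.E = s(y,x) ::ₘ s(x,y) ::ₘ s(y,d₂) ::ₘ
        (s(p',x) ::ₘ s(x,d₂) ::ₘ N'.E.erase s(p',d₂)).erase s(x,d₂)
      rw [hcfgb.2.2.2, hQe, hQ2e, show s(y,x) = s(x,y) from sym2_swap,
        Multiset.cons_swap s(p',x) s(x,y), Multiset.cons_swap s(p',x) s(y,d₂)]
  have hdegd₂ : MGraph.deg ⟨insert x N'.V,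
      s(p',x) ::ₘ s(x,d₂) ::ₘ N'.E.erase s(p',d₂)⟩ d₂ = 3 := by
    rw [hsub₂.deg_other hE' hL' hd₂x]
    rcases hdeg' d₂ hd₂V with h1 | h3
    · exfalso
      have hdp'N : N'.deg p' = 1 := by
        rw [← hsubX.deg_other hE' hL' hp'y]
        exact hdp'1
      exact two_leaf_contra hn hC' hleaf' hE' hsubX.mem_ab hdp'N h1
    · exact h3
  obtain ⟨h1, h2⟩ := main_side hn hN' hNr hsub₂ hcfg₂ hd₂x hdegd₂
  rw [show (s(x,y) : Sym2 ℕ) = s(y,x) from sym2_swap]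
  refine ⟨?_, fun _ hnp' => ?_⟩
  · obtain ⟨k, hk, M', hseq, hfin⟩ := h1
    exact ⟨k, hk, M', _, hseq, hfin⟩
  · obtain ⟨k, hk, M', hseq, hfin⟩ := h2 hnp'
    exact ⟨k, hk, M', _, hseq, hfin⟩
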